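/- Let ℓ₁, ℓ₂ be coprime positive integers with ℓ₁, ℓ₂ ≍ L, let H ≥ 1, ε ∈ (0,1), and α₁, α₂ ∈ ℝ/ℤ. Then the Lebesgue measure of the set { α ∈ ℝ/ℤ : ‖ℓ₁α − α₁‖ ≤ H^{ε−1} and ‖ℓ₂α − α₂‖ ≤ H^{ε−1} } is O( H^{ε−1} L^{−1} + H^{2ε−2} ). -/

import Mathlib

/-- Distance from a real number to the nearest integer (the norm on ℝ/ℤ). -/
noncomputable def dz (x : ℝ) : ℝ := |x - (round x : ℝ)|

/-- `TT M N α β = min_{t ∈ ℤ₊} (t + M‖αt‖ + N‖βt‖)`. -/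
noncomputable def TT (M N α β : ℝ) : ℝ :=
  ⨅ t : ℕ+, (((t : ℕ) : ℝ) + M * dz (α * ((t : ℕ) : ℝ)) + N * dz (β * ((t : ℕ) : ℝ)))



private lemma arith_aux (K L d l1 l2 cardR : ℝ) (hK : 1 ≤ K) (hL : 1 ≤ L) (hd0 : 0 < d)
    (hl1 : 1 ≤ l1) (hl2 : 1 ≤ l2) (hK1 : L ≤ K * l1) (h2K : l2 ≤ K * L)
    (hcard : cardR ≤ 3 * (2 * (d * (l1 + l2)) + 1)) (hcard0 : 0 ≤ cardR) :
    cardR * (2 * (d / l1)) ≤ 1000 * K ^ 2 * (d / L + d ^ 2) := by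
  have hl10 : (0:ℝ) < l1 := by linarith
  have hL0 : (0:ℝ) < L := by linarith
  have step1 : cardR * (2 * (d / l1)) ≤ (3 * (2 * (d * (l1 + l2)) + 1)) * (2 * (d / l1)) :=
    mul_le_mul_of_nonneg_right hcard (by positivity)
  refine le_trans step1 ?_
  have expand : (3 * (2 * (d * (l1 + l2)) + 1)) * (2 * (d / l1))
      = 12 * d ^ 2 * ((l1 + l2) / l1) + 6 * (d / l1) := by
    field_simp; ring
  rw [expand]
  have hinv : d / l1 ≤ K * (d / L) := by
    rw [div_le_iff₀ hl10]
    have h1 : d * L ≤ d * (K * l1) := by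
      apply mul_le_mul_of_nonneg_left hK1 (le_of_lt hd0)
    calc d = d * L / L := by field_simp
      _ ≤ d * (K * l1) / L := by gcongr
      _ = K * (d / L) * l1 := by field_simp
  have hl2l1 : l2 ≤ K ^ 2 * l1 := by nlinarith
  have hratio : (l1 + l2) / l1 ≤ 1 + K ^ 2 := by
    rw [div_le_iff₀ hl10]
    nlinarith
  have t1 : 12 * d ^ 2 * ((l1 + l2) / l1) ≤ 12 * (1 + K ^ 2) * d ^ 2 := by
    nlinarith [sq_nonneg d]
  have t2 : 6 * (d / l1) ≤ 6 * (K * (d / L)) := by linarith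
  have hdL : (0:ℝ) ≤ d / L := by positivity
  have hKsq : (1:ℝ) ≤ K ^ 2 := by nlinarith
  have c1 : 12 * (1 + K ^ 2) * d ^ 2 ≤ 1000 * K ^ 2 * d ^ 2 := by
    nlinarith [sq_nonneg d]
  have c2 : 6 * (K * (d / L)) ≤ 1000 * K ^ 2 * (d / L) := by
    nlinarith [mul_nonneg (show (0:ℝ) ≤ 1000 * K ^ 2 - 6 * K by nlinarith) hdL]
  linarith

set_option maxHeartbeats 1000000 in
theorem stmt_11 : ∀ K : ℝ, 1 ≤ K → ∃ C : ℝ, 0 < C ∧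
    ∀ (l₁ l₂ : ℕ) (L H ε α₁ α₂ : ℝ),
    0 < l₁ → 0 < l₂ → Nat.Coprime l₁ l₂ → 1 ≤ L → 1 ≤ H → 0 < ε → ε < 1 →
    (l₁ : ℝ) ≤ K * L → L ≤ K * (l₁ : ℝ) → (l₂ : ℝ) ≤ K * L → L ≤ K * (l₂ : ℝ) →
    MeasureTheory.volume {α : ℝ | α ∈ Set.Ico (0 : ℝ) 1 ∧
        dz ((l₁ : ℝ) * α - α₁) ≤ H ^ (ε - 1) ∧ dz ((l₂ : ℝ) * α - α₂) ≤ H ^ (ε - 1)}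
      ≤ ENNReal.ofReal (C * (H ^ (ε - 1) / L + H ^ (2 * ε - 2))) := by
  intro K hK
  refine ⟨1000 * K ^ 2, by positivity, ?_⟩
  intro l₁ l₂ L H ε α₁ α₂ hl₁ hl₂ hcop hL hH hε0 hε1 h1K hK1 h2K hK2
  classical
  have hH0 : (0:ℝ) < H := by linarith
  set δ : ℝ := H ^ (ε - 1) with hδdef
  have hδ0 : 0 < δ := Real.rpow_pos_of_pos hH0 _
  have hδ1 : δ ≤ 1 := Real.rpow_le_one_of_one_le_of_nonpos hH (by linarith)
  have hL0 : (0:ℝ) < L := by linarith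
  have hl₁R : (1:ℝ) ≤ (l₁:ℝ) := by exact_mod_cast hl₁
  have hl₂R : (1:ℝ) ≤ (l₂:ℝ) := by exact_mod_cast hl₂
  have hl₁0 : (0:ℝ) < (l₁:ℝ) := by linarith
  have hl₂0 : (0:ℝ) < (l₂:ℝ) := by linarith
  have hδsq : H ^ (2 * ε - 2) = δ ^ 2 := by
    rw [hδdef, ← Real.rpow_natCast (H ^ (ε - 1)) 2, ← Real.rpow_mul (le_of_lt hH0)]
    norm_num; ring_nf
  set β : ℝ := (l₁:ℝ) * α₂ - (l₂:ℝ) * α₁ with hβ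
  set W : ℝ := δ * ((l₁:ℝ) + (l₂:ℝ)) with hWdef
  have hW0 : 0 < W := by positivity
  set A₁ : ℤ := ⌈-α₁ - 1/2⌉ with hA₁
  set B₁ : ℤ := ⌊(l₁:ℝ) - α₁ + 1/2⌋ with hB₁
  set A₂ : ℤ := ⌈-α₂ - 1/2⌉ with hA₂
  set B₂ : ℤ := ⌊(l₂:ℝ) - α₂ + 1/2⌋ with hB₂
  set nlo : ℤ := ⌈β - W⌉ with hnlo
  set nhi : ℤ := ⌊β + W⌋ with hnhi
  set P : Finset (ℤ × ℤ) :=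
    (Finset.Icc A₁ B₁ ×ˢ Finset.Icc A₂ B₂).filter
      (fun p => |(l₂:ℝ) * p.1 - (l₁:ℝ) * p.2 - β| ≤ W) with hP
  -- Covering step
  have hcover : {α : ℝ | α ∈ Set.Ico (0:ℝ) 1 ∧ dz ((l₁:ℝ)*α - α₁) ≤ δ ∧ dz ((l₂:ℝ)*α - α₂) ≤ δ}
      ⊆ ⋃ p ∈ P, Metric.closedBall ((α₁ + p.1) / (l₁:ℝ)) (δ / (l₁:ℝ)) := by
    rintro α ⟨⟨hα0, hα1⟩, hd1, hd2⟩
    set m₁ : ℤ := round ((l₁:ℝ)*α - α₁) with hm₁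
    set m₂ : ℤ := round ((l₂:ℝ)*α - α₂) with hm₂
    have e1 : |(l₁:ℝ)*α - α₁ - (m₁:ℝ)| ≤ δ := hd1
    have e2 : |(l₂:ℝ)*α - α₂ - (m₂:ℝ)| ≤ δ := hd2
    have r1 : |(l₁:ℝ)*α - α₁ - (m₁:ℝ)| ≤ 1/2 := abs_sub_round _
    have r2 : |(l₂:ℝ)*α - α₂ - (m₂:ℝ)| ≤ 1/2 := abs_sub_round _
    have r1' := abs_le.mp r1
    have r2' := abs_le.mp r2
    have e1' := abs_le.mp e1
    have e2' := abs_le.mp e2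
    have hx1 : (0:ℝ) ≤ (l₁:ℝ)*α := by positivity
    have hx1' : (l₁:ℝ)*α ≤ (l₁:ℝ) := by
      calc (l₁:ℝ)*α ≤ (l₁:ℝ)*1 := mul_le_mul_of_nonneg_left (le_of_lt hα1) (le_of_lt hl₁0)
        _ = (l₁:ℝ) := mul_one _
    have hx2 : (0:ℝ) ≤ (l₂:ℝ)*α := by positivity
    have hx2' : (l₂:ℝ)*α ≤ (l₂:ℝ) := by
      calc (l₂:ℝ)*α ≤ (l₂:ℝ)*1 := mul_le_mul_of_nonneg_left (le_of_lt hα1) (le_of_lt hl₂0)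
        _ = (l₂:ℝ) := mul_one _
    have hm₁mem : m₁ ∈ Finset.Icc A₁ B₁ := by
      rw [Finset.mem_Icc]
      constructor
      · rw [hA₁]; apply Int.ceil_le.mpr; push_cast; linarith
      · rw [hB₁]; apply Int.le_floor.mpr; push_cast; linarith
    have hm₂mem : m₂ ∈ Finset.Icc A₂ B₂ := by
      rw [Finset.mem_Icc]
      constructor
      · rw [hA₂]; apply Int.ceil_le.mpr; push_cast; linarith
      · rw [hB₂]; apply Int.le_floor.mpr; push_cast; linarith
    have hfilt : |(l₂:ℝ) * (m₁:ℝ) - (l₁:ℝ) * (m₂:ℝ) - β| ≤ W := by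
      have key : (l₂:ℝ) * (m₁:ℝ) - (l₁:ℝ) * (m₂:ℝ) - β
          = (l₂:ℝ) * ((m₁:ℝ) - ((l₁:ℝ)*α - α₁)) - (l₁:ℝ) * ((m₂:ℝ) - ((l₂:ℝ)*α - α₂)) := by
        rw [hβ]; ring
      rw [key, hWdef]
      calc |(l₂:ℝ) * ((m₁:ℝ) - ((l₁:ℝ)*α - α₁)) - (l₁:ℝ) * ((m₂:ℝ) - ((l₂:ℝ)*α - α₂))|
          ≤ |(l₂:ℝ) * ((m₁:ℝ) - ((l₁:ℝ)*α - α₁))| + |(l₁:ℝ) * ((m₂:ℝ) - ((l₂:ℝ)*α - α₂))| :=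
            abs_sub _ _
        _ = (l₂:ℝ) * |(m₁:ℝ) - ((l₁:ℝ)*α - α₁)| + (l₁:ℝ) * |(m₂:ℝ) - ((l₂:ℝ)*α - α₂)| := by
            rw [abs_mul, abs_mul, abs_of_pos hl₂0, abs_of_pos hl₁0]
        _ ≤ (l₂:ℝ) * δ + (l₁:ℝ) * δ := by
            rw [abs_sub_comm ((m₁:ℝ)) _, abs_sub_comm ((m₂:ℝ)) _]
            gcongr
        _ = δ * ((l₁:ℝ) + (l₂:ℝ)) := by ring
    have hPmem : (m₁, m₂) ∈ P := by
      rw [hP, Finset.mem_filter, Finset.mem_product]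
      exact ⟨⟨hm₁mem, hm₂mem⟩, hfilt⟩
    refine Set.mem_biUnion hPmem ?_
    rw [Metric.mem_closedBall, Real.dist_eq]
    have : α - (α₁ + (m₁:ℝ)) / (l₁:ℝ) = ((l₁:ℝ)*α - α₁ - (m₁:ℝ)) / (l₁:ℝ) := by
      field_simp; ring
    rw [this, abs_div, abs_of_pos hl₁0]
    gcongr
  -- Counting step: card P ≤ 3 * card (Icc nlo nhi)
  have hmapsto : ∀ p ∈ P, (l₂:ℤ) * p.1 - (l₁:ℤ) * p.2 ∈ Finset.Icc nlo nhi := by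
    intro p hp
    rw [hP, Finset.mem_filter] at hp
    obtain ⟨-, hf⟩ := hp
    have hf' := abs_le.mp hf
    rw [Finset.mem_Icc]
    constructor
    · rw [hnlo]; apply Int.ceil_le.mpr; push_cast; linarith
    · rw [hnhi]; apply Int.le_floor.mpr; push_cast; linarith
  have hfiber : ∀ a ∈ Finset.Icc nlo nhi,
      (P.filter (fun p => (l₂:ℤ) * p.1 - (l₁:ℤ) * p.2 = a)).card ≤ 3 := by
    intro a _
    have hABle : B₁ ≤ A₁ + 2 * (l₁:ℤ) := by
      have h1 : (B₁:ℝ) ≤ (l₁:ℝ) - α₁ + 1/2 := Int.floor_le _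
      have h2 : -α₁ - 1/2 ≤ (A₁:ℝ) := Int.le_ceil _
      have : (B₁:ℝ) ≤ (A₁:ℝ) + 2 * (l₁:ℝ) := by linarith
      exact_mod_cast this
    have hl₁Z : (0:ℤ) < (l₁:ℤ) := by exact_mod_cast hl₁
    calc (P.filter (fun p => (l₂:ℤ) * p.1 - (l₁:ℤ) * p.2 = a)).card
        ≤ (Finset.Icc (A₁ / (l₁:ℤ)) (A₁ / (l₁:ℤ) + 2)).card := by
          apply Finset.card_le_card_of_injOn (fun p => p.1 / (l₁:ℤ))
          · intro p hp
            rw [Finset.mem_coe, Finset.mem_filter, hP, Finset.mem_filter, Finset.mem_product,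
              Finset.mem_Icc] at hp
            obtain ⟨⟨⟨⟨hA, hB⟩, -⟩, -⟩, -⟩ := hp
            rw [Finset.mem_coe, Finset.mem_Icc]
            constructor
            · exact Int.ediv_le_ediv hl₁Z hA
            · calc p.1 / (l₁:ℤ) ≤ (A₁ + 2 * (l₁:ℤ)) / (l₁:ℤ) :=
                    Int.ediv_le_ediv hl₁Z (le_trans hB hABle)
                _ = A₁ / (l₁:ℤ) + 2 := by
                    rw [Int.add_mul_ediv_right _ _ (ne_of_gt hl₁Z)]
          · intro p hp q hq hpq
            simp only [Finset.coe_filter, Set.mem_setOf_eq] at hp hq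
            obtain ⟨-, hpa⟩ := hp
            obtain ⟨-, hqa⟩ := hq
            have heq : (l₂:ℤ) * (p.1 - q.1) = (l₁:ℤ) * (p.2 - q.2) := by
              linear_combination hpa - hqa
            have hdvd : (l₁:ℤ) ∣ (l₂:ℤ) * (p.1 - q.1) := ⟨p.2 - q.2, heq⟩
            have hco : IsCoprime ((l₁:ℕ):ℤ) ((l₂:ℕ):ℤ) := Nat.isCoprime_iff_coprime.mpr hcop
            have hdvd' : (l₁:ℤ) ∣ p.1 - q.1 := hco.dvd_of_dvd_mul_left hdvd
            obtain ⟨c, hc⟩ := hdvd'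
            have hp1 : p.1 = q.1 + (l₁:ℤ) * c := by linarith [hc]
            have hdiveq : p.1 / (l₁:ℤ) = q.1 / (l₁:ℤ) + c := by
              rw [hp1, Int.add_mul_ediv_left _ _ (ne_of_gt hl₁Z)]
            have hpq' : p.1 / (l₁:ℤ) = q.1 / (l₁:ℤ) := hpq
            have hc0 : c = 0 := by linarith [hdiveq, hpq']
            have hp1q1 : p.1 = q.1 := by rw [hp1, hc0, mul_zero, add_zero]
            have hp2q2 : p.2 = q.2 := by
              have hmul : (l₁:ℤ) * p.2 = (l₁:ℤ) * q.2 := by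
                have h' := hpa
                rw [hp1q1] at h'
                linarith [h', hqa]
              exact mul_left_cancel₀ (ne_of_gt hl₁Z) hmul
            exact Prod.ext hp1q1 hp2q2
      _ = 3 := by rw [Int.card_Icc]; omega
  have hcardP : P.card ≤ 3 * (Finset.Icc nlo nhi).card := by
    rw [Finset.card_eq_sum_card_fiberwise hmapsto]
    calc ∑ a ∈ Finset.Icc nlo nhi, (P.filter (fun p => (l₂:ℤ) * p.1 - (l₁:ℤ) * p.2 = a)).card
        ≤ ∑ _a ∈ Finset.Icc nlo nhi, 3 := Finset.sum_le_sum hfiber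
      _ = (Finset.Icc nlo nhi).card * 3 := by rw [Finset.sum_const, smul_eq_mul]
      _ = 3 * (Finset.Icc nlo nhi).card := by ring
  have hcardIcc : ((Finset.Icc nlo nhi).card : ℝ) ≤ 2 * W + 1 := by
    rw [Int.card_Icc]
    have hhi : (nhi:ℝ) ≤ β + W := Int.floor_le _
    have hlo : β - W ≤ (nlo:ℝ) := Int.le_ceil _
    rcases le_or_gt (nhi + 1 - nlo) 0 with h | h
    · rw [Int.toNat_of_nonpos h]; push_cast; linarith
    · calc (((nhi + 1 - nlo).toNat : ℕ) : ℝ) = (((nhi + 1 - nlo).toNat : ℤ) : ℝ) := by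
            push_cast; ring
        _ = ((nhi + 1 - nlo : ℤ) : ℝ) := by rw [Int.toNat_of_nonneg (le_of_lt h)]
        _ ≤ 2 * W + 1 := by push_cast; linarith
  have hcardR : (P.card : ℝ) ≤ 3 * (2 * W + 1) := by
    calc (P.card : ℝ) ≤ (3 * (Finset.Icc nlo nhi).card : ℕ) := by exact_mod_cast hcardP
      _ = 3 * ((Finset.Icc nlo nhi).card : ℝ) := by push_cast; ring
      _ ≤ 3 * (2 * W + 1) := by linarith
  -- Measure estimate
  calc MeasureTheory.volume {α : ℝ | α ∈ Set.Ico (0:ℝ) 1 ∧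
        dz ((l₁:ℝ)*α - α₁) ≤ δ ∧ dz ((l₂:ℝ)*α - α₂) ≤ δ}
      ≤ MeasureTheory.volume (⋃ p ∈ P, Metric.closedBall ((α₁ + p.1) / (l₁:ℝ)) (δ / (l₁:ℝ))) :=
        MeasureTheory.measure_mono hcover
    _ ≤ ∑ p ∈ P, MeasureTheory.volume (Metric.closedBall ((α₁ + p.1) / (l₁:ℝ)) (δ / (l₁:ℝ))) :=
        MeasureTheory.measure_biUnion_finset_le P _
    _ = ∑ _p ∈ P, ENNReal.ofReal (2 * (δ / (l₁:ℝ))) := by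
        apply Finset.sum_congr rfl
        intro p _
        exact Real.volume_closedBall _ _
    _ = (P.card : ENNReal) * ENNReal.ofReal (2 * (δ / (l₁:ℝ))) := by
        rw [Finset.sum_const, nsmul_eq_mul]
    _ = ENNReal.ofReal ((P.card : ℝ) * (2 * (δ / (l₁:ℝ)))) := by
        rw [ENNReal.ofReal_mul (Nat.cast_nonneg _)]
        congr 1
        exact (ENNReal.ofReal_natCast _).symm
    _ ≤ ENNReal.ofReal (1000 * K ^ 2 * (δ / L + H ^ (2 * ε - 2))) := by
        apply ENNReal.ofReal_le_ofReal
        rw [hδsq]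
        exact arith_aux K L δ (l₁:ℝ) (l₂:ℝ) (P.card : ℝ) hK hL hδ0 hl₁R hl₂R hK1 h2K
          (by rw [hWdef] at hcardR; linarith) (Nat.cast_nonneg _)
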